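/- arXiv:1505.01305 — 5 statements merged into one kernel-verified Lean document; each statement's English description precedes it below -/
import Mathlib

section
/- With μ defined by the recursion μ(k₀,k₁,...,kₙ) = a(k₀,k₁)μ(k₁,...,kₙ) + b(k₀,k₁)μ(k₂,...,kₙ) (with μ(i)=1/2, μ(j₁,j₂) = (1-β_{j₁}β_{j₂})/4), the family of cylinder measures is shift-consistent under appending: μ(k₀,...,kₙ) = μ(k₀,...,kₙ,1) + μ(k₀,...,kₙ,2) for every string. -/
open Real

/-- β₁ = sin 2θ, β₂ = -sin 2θ (symbol 0 stands for "1", symbol 1 for "2"). -/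
noncomputable def beta (θ : ℝ) : Fin 2 → ℝ := ![sin (2 * θ), -sin (2 * θ)]

noncomputable def gamma (θ : ℝ) : ℝ := (1 - sin (2 * θ) ^ 2) / 4

/-- a(i,j) = 0 if i = j, 1 otherwise. -/
noncomputable def aCoef (i j : Fin 2) : ℝ := if i = j then 0 else 1

/-- b(i,j) = γ if i = j, -γ otherwise. -/
noncomputable def bCoef (θ : ℝ) (i j : Fin 2) : ℝ := if i = j then gamma θ else -gamma θ

/-- The cylinder measure μ on finite strings over {1,2}. -/
noncomputable def mu (θ : ℝ) : List (Fin 2) → ℝ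
  | [] => 1
  | [_] => 1 / 2
  | [i, j] => (1 - beta θ i * beta θ j) / 4
  | k0 :: k1 :: k2 :: rest =>
      aCoef k0 k1 * mu θ (k1 :: k2 :: rest) + bCoef θ k0 k1 * mu θ (k2 :: rest)

lemma mu_cons_cons (θ : ℝ) (i j c : Fin 2) (t : List (Fin 2)) :
    mu θ (i :: j :: c :: t) =
      aCoef i j * mu θ (j :: c :: t) + bCoef θ i j * mu θ (c :: t) := rfl

lemma mu_aux (θ : ℝ) : ∀ l : List (Fin 2),
    mu θ (l ++ [0]) + mu θ (l ++ [1]) = mu θ l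
  | [] => by simp [mu]; norm_num
  | [i] => by fin_cases i <;> simp [mu, beta] <;> ring
  | [i, j] => by
      fin_cases i <;> fin_cases j <;>
        simp [mu, beta, aCoef, bCoef, gamma] <;> ring
  | (i :: j :: c :: rest) => by
      have h1 := mu_aux θ (j :: c :: rest)
      have h2 := mu_aux θ (c :: rest)
      have e0 : (i :: j :: c :: rest) ++ [0] = i :: j :: ((c :: rest) ++ [0]) := rfl
      have e1 : (i :: j :: c :: rest) ++ [1] = i :: j :: ((c :: rest) ++ [1]) := rfl
      rw [e0, e1]
      rcases rest with _ | ⟨d, t⟩ <;>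
        simp only [List.cons_append, List.nil_append, mu_cons_cons] at * <;>
        rw [← h1, ← h2] <;> ring

/-- Shift-consistency under appending: μ(k₀,...,kₙ) = μ(k₀,...,kₙ,1) + μ(k₀,...,kₙ,2). -/
theorem mu_consistent_append (θ : ℝ) (hθ : θ ∈ Set.Ioo 0 (π / 2)) (hθ' : θ ≠ π / 4)
    (k : Fin 2) (l : List (Fin 2)) :
    mu θ (k :: l) = mu θ ((k :: l) ++ [0]) + mu θ ((k :: l) ++ [1]) := by
  exact (mu_aux θ (k :: l)).symm
end

section
/- The cylinder measures satisfy the reversal symmetry μ(j₁,j₂,...,jₙ) = μ(jₙ,jₙ₋₁,...,j₁) for every finite string (j₁,...,jₙ) ∈ {1,2}ⁿ. -/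
open Real

lemma mu_cons (θ : ℝ) (k0 k1 : Fin 2) (rest : List (Fin 2)) :
    mu θ (k0 :: k1 :: rest) = aCoef k0 k1 * mu θ (k1 :: rest) + bCoef θ k0 k1 * mu θ rest := by
  cases rest with
  | nil => fin_cases k0 <;> fin_cases k1 <;> simp [mu, aCoef, bCoef, beta, gamma] <;> ring
  | cons a t => rfl

lemma mu_append (θ : ℝ) : ∀ (l : List (Fin 2)) (y x : Fin 2),
    mu θ (l ++ [y, x]) = aCoef x y * mu θ (l ++ [y]) + bCoef θ x y * mu θ l
  | [], y, x => by
      fin_cases y <;> fin_cases x <;> simp [mu, aCoef, bCoef, beta, gamma] <;> ring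
  | [w], y, x => by
      fin_cases w <;> fin_cases y <;> fin_cases x <;>
        simp [mu, aCoef, bCoef, beta, gamma] <;> ring
  | w :: v :: l'', y, x => by
      have h1 := mu_append θ (v :: l'') y x
      have h2 := mu_append θ l'' y x
      simp only [List.cons_append] at h1 h2 ⊢
      rw [mu_cons θ w v, h1, h2, mu_cons θ w v (l'' ++ [y]), mu_cons θ w v l'']
      ring

lemma mu_reverse_aux (θ : ℝ) : ∀ (l : List (Fin 2)), mu θ l = mu θ l.reverse
  | [] => rfl
  | [_] => rfl
  | [i, j] => by fin_cases i <;> fin_cases j <;> simp [mu, beta] <;> ring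
  | k0 :: k1 :: k2 :: rest => by
      have h1 := mu_reverse_aux θ (k1 :: k2 :: rest)
      have h2 := mu_reverse_aux θ (k2 :: rest)
      have hr : (k0 :: k1 :: k2 :: rest).reverse = (k2 :: rest).reverse ++ [k1, k0] := by
        simp
      rw [hr, mu_append, show (k2 :: rest).reverse ++ [k1] = (k1 :: k2 :: rest).reverse by simp,
        ← h1, ← h2, mu_cons]

/-- Reversal symmetry of the cylinder measures: μ(j₁,...,jₙ) = μ(jₙ,...,j₁). -/
theorem mu_reverse (θ : ℝ) (hθ : θ ∈ Set.Ioo 0 (π / 2)) (hθ' : θ ≠ π / 4)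
    (l : List (Fin 2)) :
    mu θ l = mu θ l.reverse := mu_reverse_aux θ l
end

section
/- For every n ≥ 1 the cylinder measures satisfy the expansion μ(k, j₁,...,jₙ) = μ(j₁,...,jₙ)/2 - (β_k β_{j₁}/4)μ(j₂,...,jₙ) + (β_k β_{j₂}/8)μ(j₃,...,jₙ) - ... + (-1)^{n-2}(β_k β_{j_{n-2}}/2^{n-1})μ(j_{n-1},jₙ) + (-1)^{n-1}β_k β_{j_{n-1}}/2^{n+1} + (-1)^n β_k β_{jₙ}/2^{n+1}. -/
open Real

noncomputable def G (θ : ℝ) (j : List (Fin 2)) : ℝ :=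
  ∑ i ∈ Finset.range (j.length - 2),
      (-1 : ℝ) ^ (i + 1) * beta θ (j.getD i 0) / 2 ^ (i + 2) * mu θ (j.drop (i + 1))
  + (-1 : ℝ) ^ (j.length - 1) * beta θ (j.getD (j.length - 2) 0) / 2 ^ (j.length + 1)
  + (-1 : ℝ) ^ j.length * beta θ (j.getD (j.length - 1) 0) / 2 ^ (j.length + 1)

lemma Grec (θ : ℝ) (a : Fin 2) (rest : List (Fin 2)) (h : 2 ≤ rest.length) :
    G θ (a :: rest) = -beta θ a * mu θ rest / 4 - G θ rest / 2 := by
  obtain ⟨m, hm⟩ : ∃ m, rest.length = m + 2 := ⟨rest.length - 2, by omega⟩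
  simp only [G, List.length_cons, hm]
  have h1 : m + 2 + 1 - 2 = m + 1 := by omega
  have h2 : m + 2 + 1 - 1 = m + 2 := by omega
  have h3 : m + 2 - 2 = m := by omega
  have h4 : m + 2 - 1 = m + 1 := by omega
  rw [h1, h2, h3, h4, Finset.sum_range_succ']
  simp only [List.getD_cons_succ, List.getD_cons_zero, List.drop_succ_cons, List.drop_zero]
  have hsum : ∑ i ∈ Finset.range m,
      (-1 : ℝ) ^ (i + 1 + 1) * beta θ (rest.getD i 0) / 2 ^ (i + 1 + 2)
        * mu θ (rest.drop (i + 1))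
      = (-(1:ℝ)/2) * ∑ i ∈ Finset.range m,
          (-1 : ℝ) ^ (i + 1) * beta θ (rest.getD i 0) / 2 ^ (i + 2)
            * mu θ (rest.drop (i + 1)) := by
    rw [Finset.mul_sum]
    exact Finset.sum_congr rfl fun i _ => by ring
  rw [hsum]
  ring

lemma key (θ : ℝ) : ∀ n (j : List (Fin 2)), j.length = n + 2 → ∀ k,
    mu θ (k :: j) = mu θ j / 2 + beta θ k * G θ j := by
  intro n
  induction n with
  | zero =>
    intro j hj k
    match j, hj with
    | [a, b], _ =>
      fin_cases k <;> fin_cases a <;> fin_cases b <;>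
        simp [mu, G, beta, aCoef, bCoef, gamma] <;> ring
  | succ n ih =>
    intro j hj k
    match j, hj with
    | a :: c :: t, hj =>
      have hlen : (c :: t).length = n + 2 := by simpa using hj
      have hrec : mu θ (k :: a :: c :: t)
          = aCoef k a * mu θ (a :: c :: t) + bCoef θ k a * mu θ (c :: t) := rfl
      have hIH := ih (c :: t) hlen a
      have hG := Grec θ a (c :: t) (by omega)
      rw [hrec, hIH, hG]
      fin_cases k <;> fin_cases a <;> simp [aCoef, bCoef, gamma, beta] <;> ring

/-- The expansion of μ(k, j₁,...,jₙ) as an alternating sum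
(here j i = j.getD (i-1) 0, i.e. lists are 0-indexed). -/
theorem mu_expansion (θ : ℝ) (hθ : θ ∈ Set.Ioo 0 (π / 2))
    (k : Fin 2) (j : List (Fin 2)) (hn : 2 ≤ j.length) :
    mu θ (k :: j) =
      mu θ j / 2
      + ∑ i ∈ Finset.range (j.length - 2),
          (-1 : ℝ) ^ (i + 1) * beta θ k * beta θ (j.getD i 0) / 2 ^ (i + 2)
            * mu θ (j.drop (i + 1))
      + (-1 : ℝ) ^ (j.length - 1) * beta θ k * beta θ (j.getD (j.length - 2) 0)
          / 2 ^ (j.length + 1)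
      + (-1 : ℝ) ^ j.length * beta θ k * beta θ (j.getD (j.length - 1) 0)
          / 2 ^ (j.length + 1) := by
  rw [key θ (j.length - 2) j (by omega) k]
  unfold G
  have h1 : beta θ k * ∑ i ∈ Finset.range (j.length - 2),
      (-1 : ℝ) ^ (i + 1) * beta θ (j.getD i 0) / 2 ^ (i + 2) * mu θ (j.drop (i + 1))
      = ∑ i ∈ Finset.range (j.length - 2),
          (-1 : ℝ) ^ (i + 1) * beta θ k * beta θ (j.getD i 0) / 2 ^ (i + 2)
            * mu θ (j.drop (i + 1)) := by
    rw [Finset.mul_sum]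
    exact Finset.sum_congr rfl fun i _ => by ring
  rw [mul_add, mul_add, h1]
  ring
end

section
/- If θ ≠ π/4 (so 0 < β₁ < 1), then μ is strictly positive on every cylinder: μ(x₀,...,xₙ) > 0 for every finite string. -/
open Real

/-- Key inductive bounds: μ is positive and prepending a symbol scales μ by a
factor in [(1-s)/2, (1+s)/2] where s = sin 2θ. -/
lemma mu_bounds (θ : ℝ) (hs0 : 0 < Real.sin (2*θ)) (hs1 : Real.sin (2*θ) < 1) :
    ∀ l : List (Fin 2), l ≠ [] →
      0 < mu θ l ∧ ∀ j : Fin 2,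
        (1 - Real.sin (2*θ))/2 * mu θ l ≤ mu θ (j :: l) ∧
        mu θ (j :: l) ≤ (1 + Real.sin (2*θ))/2 * mu θ l := by
  intro l
  induction l with
  | nil => simp
  | cons k rest ih =>
    intro _
    cases rest with
    | nil =>
      refine ⟨by norm_num [mu], ?_⟩
      intro j
      fin_cases j <;> fin_cases k <;>
        simp [mu, beta] <;> constructor <;> nlinarith
    | cons k2 rest2 =>
      obtain ⟨hpos, hb⟩ := ih (by simp)
      obtain ⟨hb1, hb2⟩ := hb k
      have hL : 0 < mu θ (k :: k2 :: rest2) := by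
        have : 0 < (1 - Real.sin (2*θ))/2 * mu θ (k2 :: rest2) :=
          mul_pos (by linarith) hpos
        linarith
      refine ⟨hL, ?_⟩
      intro j
      have hmu : mu θ (j :: k :: k2 :: rest2) =
          aCoef j k * mu θ (k :: k2 :: rest2) + bCoef θ j k * mu θ (k2 :: rest2) := rfl
      have h1 := mul_le_mul_of_nonneg_left hb1
        (by linarith : (0:ℝ) ≤ (1 + Real.sin (2*θ))/2)
      have h2 := mul_le_mul_of_nonneg_left hb2
        (by linarith : (0:ℝ) ≤ (1 - Real.sin (2*θ))/2)
      by_cases hjk : j = k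
      · rw [hmu, hjk]
        simp only [aCoef, bCoef, eq_self_iff_true, if_true, gamma]
        constructor <;> nlinarith
      · rw [hmu]
        simp only [aCoef, bCoef, if_neg hjk, gamma]
        constructor <;> nlinarith

/-- If θ ≠ π/4 then μ is strictly positive on every cylinder. -/
theorem mu_pos (θ : ℝ) (hθ : θ ∈ Set.Ioo 0 (π / 2)) (hθ' : θ ≠ π / 4)
    (l : List (Fin 2)) (hl : l ≠ []) :
    0 < mu θ l := by
  obtain ⟨h1, h2⟩ := hθ
  have hpi := Real.pi_pos
  have hs0 : 0 < Real.sin (2*θ) := by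
    apply Real.sin_pos_of_pos_of_lt_pi <;> linarith
  have hs1 : Real.sin (2*θ) < 1 := by
    rcases lt_or_eq_of_le (Real.sin_le_one (2*θ)) with h | h
    · exact h
    · exfalso
      obtain ⟨k, hk⟩ := Real.sin_eq_one_iff.mp h
      have hk1 : (k : ℝ) < 1 := by nlinarith
      have hk2 : (-1 : ℝ) < (k : ℝ) := by nlinarith
      have : k = 0 := by
        have a1 : k < 1 := by exact_mod_cast hk1
        have a2 : (-1 : ℤ) < k := by exact_mod_cast hk2
        omega
      rw [this] at hk
      apply hθ'
      push_cast at hk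
      linarith
  exact (mu_bounds θ hs0 hs1 l hl).1
end

section
/- For the finite-level Jacobians Jⁿ(x) := μ(x₀,...,xₙ)/μ(x₁,...,xₙ), the bounds γ ≤ Jⁿ(x) ≤ 1 - γ hold for all n ≥ 2 and all x ∈ {1,2}^ℕ, where γ = (1-β₁²)/4. -/
open Real

lemma key_s12 (θ : ℝ) (hs0 : 0 < sin (2*θ)) (hs1 : sin (2*θ) < 1) :
    ∀ (l : List (Fin 2)) (a b c : Fin 2),
      0 < mu θ (b :: c :: l) ∧
      (1 - sin (2*θ))/2 * mu θ (b :: c :: l) ≤ mu θ (a :: b :: c :: l) ∧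
      mu θ (a :: b :: c :: l) ≤ (1 + sin (2*θ))/2 * mu θ (b :: c :: l) := by
  intro l
  induction l with
  | nil =>
    intro a b c
    fin_cases a <;> fin_cases b <;> fin_cases c <;>
      simp [mu, beta, aCoef, bCoef, gamma] <;>
      refine ⟨by nlinarith, by nlinarith [mul_nonneg hs0.le (sq_nonneg (1 - sin (2*θ))), mul_nonneg hs0.le (sq_nonneg (1 + sin (2*θ)))], by nlinarith [mul_nonneg hs0.le (sq_nonneg (1 - sin (2*θ))), mul_nonneg hs0.le (sq_nonneg (1 + sin (2*θ)))]⟩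
  | cons d l' ih =>
    intro a b c
    obtain ⟨h1, h2, h3⟩ := ih b c d
    have hM1 : 0 < mu θ (b :: c :: d :: l') := by nlinarith
    have hrec : mu θ (a :: b :: c :: d :: l') =
        aCoef a b * mu θ (b :: c :: d :: l') + bCoef θ a b * mu θ (c :: d :: l') := rfl
    refine ⟨hM1, ?_, ?_⟩ <;> rw [hrec] <;>
      rcases eq_or_ne a b with h | h <;>
      simp [aCoef, bCoef, gamma, h] <;> nlinarith

/-- Bounds on the finite-level Jacobians:
γ ≤ μ(x₀,...,xₙ)/μ(x₁,...,xₙ) ≤ 1 - γ for all n ≥ 2. -/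
theorem jacobian_bounds (θ : ℝ) (hθ : θ ∈ Set.Ioo 0 (π / 2)) (hθ' : θ ≠ π / 4)
    (x : ℕ → Fin 2) (n : ℕ) (hn : 2 ≤ n) :
    gamma θ ≤ mu θ (List.ofFn fun i : Fin (n + 1) => x i)
                / mu θ (List.ofFn fun i : Fin n => x (i + 1)) ∧
    mu θ (List.ofFn fun i : Fin (n + 1) => x i)
        / mu θ (List.ofFn fun i : Fin n => x (i + 1)) ≤ 1 - gamma θ := by
  obtain ⟨hθ0, hθπ⟩ := hθ
  have hπ := pi_pos
  have hs0 : 0 < sin (2 * θ) := sin_pos_of_pos_of_lt_pi (by linarith) (by linarith)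
  have hs1 : sin (2 * θ) < 1 := by
    rcases lt_or_eq_of_le (sin_le_one (2 * θ)) with h | h
    · exact h
    · exfalso
      obtain ⟨k, hk⟩ := Real.sin_eq_one_iff.mp h
      have hk0 : k = 0 := by
        rcases lt_trichotomy k 0 with hk' | hk' | hk'
        · have : (k : ℝ) ≤ -1 := by exact_mod_cast (show k ≤ -1 by omega)
          nlinarith
        · exact hk'
        · have : (1 : ℝ) ≤ (k : ℝ) := by exact_mod_cast hk'
          nlinarith
      rw [hk0] at hk
      apply hθ'
      push_cast at hk
      linarith
  obtain ⟨m, rfl⟩ : ∃ m, n = m + 2 := ⟨n - 2, by omega⟩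
  have hfull : (List.ofFn fun i : Fin (m + 2 + 1) => x i) =
      x 0 :: x 1 :: x 2 :: List.ofFn (fun i : Fin m => x (i + 3)) := by
    rw [List.ofFn_succ, List.ofFn_succ, List.ofFn_succ]
    simp [Fin.val_succ]
    rw [Nat.mod_eq_of_lt (by omega)]
  have htail : (List.ofFn fun i : Fin (m + 2) => x (i + 1)) =
      x 1 :: x 2 :: List.ofFn (fun i : Fin m => x (i + 3)) := by
    rw [List.ofFn_succ, List.ofFn_succ]
    simp only [Fin.val_succ, Fin.val_zero]
  rw [hfull, htail]
  obtain ⟨hpos, hl, hu⟩ := key_s12 θ hs0 hs1 (List.ofFn fun i : Fin m => x (i + 3)) (x 0) (x 1) (x 2)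
  constructor
  · rw [le_div_iff₀ hpos, gamma]
    nlinarith [mul_nonneg (mul_nonneg hs0.le (sub_nonneg.mpr hs1.le)) hpos.le]
  · rw [div_le_iff₀ hpos, gamma]
    nlinarith [mul_nonneg (mul_nonneg hs0.le (sub_nonneg.mpr hs1.le)) hpos.le]
end
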